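/- arXiv:1412.2662 — 2 statements merged into one kernel-verified Lean document; each statement's English description precedes it below -/
import Mathlib

section
/- For n ≥ 4, the subgroup of the symmetric group on Z2^n generated by the permutations of all gates in Ω_n^2 equals the alternating group on Z2^n; for 1 ≤ n ≤ 3 it equals the full symmetric group on Z2^n. -/
/-- The k-CNOT gate on `m` wires with control set `I` (with `j` removed, so that when
`j ∉ I` this is exactly the gate `C_{I;j}`): it replaces coordinate `j` of `x` by
`x j + ∏ i ∈ I.erase j, x i` and leaves all other coordinates unchanged.
With `I = ∅` this is the gate NOT_j, with `I = {i}`, `i ≠ j`, the gate CNOT_{i;j},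
and with `I = {i1, i2}`, `i1, i2, j` pairwise distinct, the gate 2-CNOT_{i1,i2;j}. -/
def kcnot (m : ℕ) (I : Finset (Fin m)) (j : Fin m) : Equiv.Perm (Fin m → ZMod 2) :=
  Function.Involutive.toPerm
    (fun x => Function.update x j (x j + ∏ i ∈ I.erase j, x i))
    (by
      intro x
      have ht : ∀ (y : Fin m → ZMod 2) (v : ZMod 2),
          ∏ i ∈ I.erase j, (Function.update y j v) i = ∏ i ∈ I.erase j, y i :=
        fun y v => Finset.prod_congr rfl fun i hi =>
          Function.update_of_ne (Finset.ne_of_mem_erase hi) _ _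
      have h2 : ∀ a : ZMod 2, a + a = 0 := by decide
      funext y
      by_cases hy : y = j
      · subst hy
        simp [Function.update_self, ht, add_assoc, h2]
      · simp [Function.update_of_ne hy])

/-- The set Ω_n^2 of all gates NOT, CNOT and 2-CNOT on `n` wires, viewed as
permutations of the Boolean cube `Fin n → ZMod 2`. -/
def gateSet (n : ℕ) : Set (Equiv.Perm (Fin n → ZMod 2)) :=
  {g | ∃ (I : Finset (Fin n)) (j : Fin n), I.card ≤ 2 ∧ j ∉ I ∧ g = kcnot n I j}

/-- The permutation defined by a reversible circuit (a list of gates applied in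
list order: the head of the list is applied first). -/
def circuitPerm {n : ℕ} (l : List (Equiv.Perm (Fin n → ZMod 2))) :
    Equiv.Perm (Fin n → ZMod 2) :=
  l.reverse.prod

/-- The extending map φ_{n,n+q} appending `q` zero coordinates. -/
def extendMap (n q : ℕ) (x : Fin n → ZMod 2) : Fin (n + q) → ZMod 2 :=
  fun i => if h : (i : ℕ) < n then x ⟨i, h⟩ else 0

/-- The reducing map ψ^π sending `y` to `(y (π 1), …, y (π n))`. -/
def reduceMap (n q : ℕ) (π : Equiv.Perm (Fin (n + q))) (y : Fin (n + q) → ZMod 2) :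
    Fin n → ZMod 2 :=
  fun i => y (π (Fin.castAdd q i))

/-- A map `f : Z2^n → Z2^n` is realized by some reversible circuit on `n + q` wires
using `q` additional inputs.  `F(n,q)` is the set of all such maps. -/
def Realizes (n q : ℕ) (f : (Fin n → ZMod 2) → (Fin n → ZMod 2)) : Prop :=
  ∃ l : List (Equiv.Perm (Fin (n + q) → ZMod 2)),
    (∀ g ∈ l, g ∈ gateSet (n + q)) ∧
    ∃ π : Equiv.Perm (Fin (n + q)),
      ∀ x, reduceMap n q π (circuitPerm l (extendMap n q x)) = f x

/-- `L(f,q)`: the minimal complexity of a reversible circuit realizing `f` using `q`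
additional inputs. -/
noncomputable def Lfq (n q : ℕ) (f : (Fin n → ZMod 2) → (Fin n → ZMod 2)) : ℕ :=
  sInf {m | ∃ l : List (Equiv.Perm (Fin (n + q) → ZMod 2)),
    l.length = m ∧ (∀ g ∈ l, g ∈ gateSet (n + q)) ∧
    ∃ π : Equiv.Perm (Fin (n + q)),
      ∀ x, reduceMap n q π (circuitPerm l (extendMap n q x)) = f x}

/-- The Shannon function `L(n,q) = max_{f ∈ F(n,q)} L(f,q)`. -/
noncomputable def shannonL (n q : ℕ) : ℕ :=
  sSup (Lfq n q '' {f | Realizes n q f})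

namespace Stmt8

open Equiv Equiv.Perm Finset Function

abbrev cube (n : ℕ) := Fin n → ZMod 2

lemma z2 : ∀ a : ZMod 2, a = 0 ∨ a = 1 := by decide
lemma z2add : ∀ a : ZMod 2, a + a = 0 := by decide
lemma z2mul : ∀ a : ZMod 2, a * a = a := by decide
lemma z2ne : ∀ a : ZMod 2, a ≠ 0 → a = 1 := by decide

variable {n : ℕ}

lemma kcnot_apply (I : Finset (Fin n)) (j : Fin n) (x : cube n) :
    kcnot n I j x = Function.update x j (x j + ∏ i ∈ I.erase j, x i) := rfl

/-- product over a union in `ZMod 2` (idempotent elements). -/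
lemma prod_union_z2 (S T : Finset (Fin n)) (x : cube n) :
    ∏ i ∈ S ∪ T, x i = (∏ i ∈ S, x i) * ∏ i ∈ T, x i := by
  have h1 : (∏ i ∈ S, x i) * ∏ i ∈ T, x i
      = (∏ i ∈ S ∪ T, x i) * ∏ i ∈ S ∩ T, x i := (Finset.prod_union_inter).symm
  have h2 : S ∩ T ⊆ S ∪ T := (Finset.inter_subset_left).trans Finset.subset_union_left
  have h3 : (∏ i ∈ (S ∪ T) \ (S ∩ T), x i) * ∏ i ∈ S ∩ T, x i = ∏ i ∈ S ∪ T, x i :=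
    Finset.prod_sdiff h2
  have h4 : (∏ i ∈ S ∩ T, x i) * ∏ i ∈ S ∩ T, x i = ∏ i ∈ S ∩ T, x i := by
    rw [← Finset.prod_mul_distrib]
    exact Finset.prod_congr rfl fun i _ => z2mul _
  rw [h1, ← h3, mul_assoc, h4]

lemma key_identity (S T : Finset (Fin n)) (b j : Fin n) (hbS : b ∉ S) (hbT : b ∉ T)
    (hbj : b ≠ j) (hjS : j ∉ S) (hjT : j ∉ T) :
    kcnot n (S ∪ T) j =
      kcnot n (insert b S) j * kcnot n T b * kcnot n (insert b S) j * kcnot n T b := by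
  have hjbS : j ∉ insert b S := by
    simp only [Finset.mem_insert]; rintro (rfl | h) ; exact hbj rfl; exact hjS h
  have eb : T.erase b = T := Finset.erase_eq_of_notMem hbT
  have ej : (insert b S).erase j = insert b S := Finset.erase_eq_of_notMem hjbS
  have ejU : (S ∪ T).erase j = S ∪ T := by
    apply Finset.erase_eq_of_notMem; simp [hjS, hjT]
  apply Equiv.ext
  intro x
  simp only [Equiv.Perm.mul_apply, kcnot_apply, eb, ej, ejU]
  set s := ∏ i ∈ S, x i with hs
  set t := ∏ i ∈ T, x i with htt
  set x1 := Function.update x b (x b + t) with hx1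
  -- products over sets not containing the updated coordinate are unchanged
  have pS1 : ∏ i ∈ S, x1 i = s := Finset.prod_update_of_notMem hbS _ _
  have pI1 : ∏ i ∈ insert b S, x1 i = (x b + t) * s := by
    rw [Finset.prod_insert hbS, hx1, Function.update_self, pS1]
  set x2 := Function.update x1 j (x1 j + ∏ i ∈ insert b S, x1 i) with hx2
  have x2j : x2 j = x j + (x b + t) * s := by
    rw [hx2, Function.update_self, pI1, hx1, Function.update_of_ne (Ne.symm hbj)]
  have x2b : x2 b = x b + t := by
    rw [hx2, Function.update_of_ne hbj, hx1, Function.update_self]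
  have pT2 : ∏ i ∈ T, x2 i = t := by
    rw [hx2, Finset.prod_update_of_notMem hjT, hx1, Finset.prod_update_of_notMem hbT]
  set x3 := Function.update x2 b (x2 b + ∏ i ∈ T, x2 i) with hx3
  have x3b : x3 b = x b := by
    rw [hx3, Function.update_self, pT2, x2b, add_assoc, z2add, add_zero]
  have x3j : x3 j = x j + (x b + t) * s := by
    rw [hx3, Function.update_of_ne (Ne.symm hbj), x2j]
  have pS3 : ∏ i ∈ S, x3 i = s := by
    rw [hx3, Finset.prod_update_of_notMem hbS, hx2, Finset.prod_update_of_notMem hjS,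
      hx1, Finset.prod_update_of_notMem hbS]
  have pI3 : ∏ i ∈ insert b S, x3 i = x b * s := by
    rw [Finset.prod_insert hbS, x3b, pS3]
  funext k
  by_cases hk : k = j
  · subst hk
    rw [Function.update_self, Function.update_self, x3j, pI3, prod_union_z2, ← hs, ← htt]
    ring_nf
    rw [show (2:ZMod 2) = 0 by decide]
    ring
  · rw [Function.update_of_ne hk, Function.update_of_ne hk]
    by_cases hkb : k = b
    · subst hkb; rw [x3b]
    · rw [hx3, Function.update_of_ne hkb, hx2, Function.update_of_ne hk, hx1,
        Function.update_of_ne hkb]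


/-- the subgroup generated by the gates -/
abbrev H (n : ℕ) : Subgroup (Equiv.Perm (cube n)) := Subgroup.closure (gateSet n)

lemma gate_mem {I : Finset (Fin n)} {j : Fin n} (h2 : I.card ≤ 2) (hj : j ∉ I) :
    kcnot n I j ∈ H n :=
  Subgroup.subset_closure ⟨I, j, h2, hj, rfl⟩

lemma exists_ancilla {A : Finset (Fin n)} (h : A.card < n) : ∃ b, b ∉ A := by
  by_contra hall
  push_neg at hall
  have : A = Finset.univ := Finset.eq_univ_iff_forall.2 hall
  rw [this, Finset.card_univ, Fintype.card_fin] at h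
  omega

lemma kcnot_mem : ∀ (I : Finset (Fin n)) (j : Fin n), j ∉ I → I.card + 2 ≤ n →
    kcnot n I j ∈ H n := by
  intro I
  induction I using Finset.strongInduction with
  | _ I ih =>
    intro j hj hc
    by_cases h2 : I.card ≤ 2
    · exact gate_mem h2 hj
    · push_neg at h2
      have hne : I.Nonempty := Finset.card_pos.mp (by omega)
      obtain ⟨a, ha⟩ := hne
      have hcard : (insert j I).card < n := by
        have := Finset.card_insert_le j I
        omega
      obtain ⟨b, hb⟩ := exists_ancilla hcard
      have hbj : b ≠ j := fun h => hb (h ▸ Finset.mem_insert_self j I)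
      have hbI : b ∉ I := fun h => hb (Finset.mem_insert_of_mem h)
      have hba : b ∉ ({a} : Finset (Fin n)) := by
        simp only [Finset.mem_singleton]; rintro rfl; exact hbI ha
      have hbT : b ∉ I.erase a := fun h => hbI (Finset.mem_of_mem_erase h)
      have hjS : j ∉ ({a} : Finset (Fin n)) := by
        simp only [Finset.mem_singleton]; rintro rfl; exact hj ha
      have hjT : j ∉ I.erase a := fun h => hj (Finset.mem_of_mem_erase h)
      have hU : ({a} : Finset (Fin n)) ∪ I.erase a = I := by
        rw [show ({a} : Finset (Fin n)) ∪ I.erase a = insert a (I.erase a) from rfl, Finset.insert_erase ha]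
      have hid := key_identity {a} (I.erase a) b j hba hbT hbj hjS hjT
      rw [hU] at hid
      rw [hid]
      have hQ : kcnot n (insert b {a}) j ∈ H n := by
        apply gate_mem
        · exact (Finset.card_insert_le _ _).trans (by simp)
        · simp only [Finset.mem_insert, Finset.mem_singleton]
          rintro (rfl | rfl)
          · exact hbj rfl
          · exact hj ha
      have hP : kcnot n (I.erase a) b ∈ H n := by
        apply ih _ (Finset.erase_ssubset ha) b hbT
        have := Finset.card_erase_of_mem ha
        omega
      exact mul_mem (mul_mem (mul_mem hQ hP) hQ) hP

lemma gate_even (hn : 4 ≤ n) {g : Equiv.Perm (cube n)} (hg : g ∈ gateSet n) :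
    g ∈ alternatingGroup (cube n) := by
  obtain ⟨I, j, h2, hj, rfl⟩ := hg
  have hcard : (insert j I).card < n := by
    have := Finset.card_insert_le j I
    omega
  obtain ⟨b, hb⟩ := exists_ancilla hcard
  have hbj : b ≠ j := fun h => hb (h ▸ Finset.mem_insert_self j I)
  have hbI : b ∉ I := fun h => hb (Finset.mem_insert_of_mem h)
  have hid := key_identity I ∅ b j hbI (Finset.notMem_empty b) hbj hj (Finset.notMem_empty j)
  rw [Finset.union_empty] at hid
  rw [Equiv.Perm.mem_alternatingGroup, hid]
  simp only [map_mul]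
  generalize Equiv.Perm.sign (kcnot n (insert b I) j) = u
  generalize Equiv.Perm.sign (kcnot n ∅ b) = v
  have : u * v * u * v = (u * v) ^ 2 := by rw [sq, ← mul_assoc]
  rw [this, Int.units_sq]


def unitv (i : Fin n) : cube n := fun k => if k = i then 1 else 0

@[simp] lemma unitv_same (i : Fin n) : unitv i i = 1 := if_pos rfl
@[simp] lemma unitv_ne {i k : Fin n} (h : k ≠ i) : unitv i k = 0 := if_neg h

lemma add_self_cube (v : cube n) : v + v = 0 := by
  funext i; exact z2add (v i)

/-- translation by `v` -/
def transPerm (v : cube n) : Equiv.Perm (cube n) :=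
  Function.Involutive.toPerm (fun x => x + v)
    (fun x => by simp [add_assoc, add_self_cube])

lemma transPerm_apply (v x : cube n) : transPerm v x = x + v := rfl

lemma transPerm_unit (i : Fin n) : transPerm (unitv i) = kcnot n ∅ i := by
  apply Equiv.ext; intro x
  rw [transPerm_apply, kcnot_apply]
  funext k
  by_cases hk : k = i
  · subst hk; simp [unitv]
  · simp [Function.update_of_ne hk, unitv_ne hk]

lemma transPerm_mem (v : cube n) : transPerm v ∈ H n := by
  suffices h : ∀ (s : Finset (Fin n)) (v : cube n), (∀ i ∉ s, v i = 0) → transPerm v ∈ H n by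
    exact h Finset.univ v (fun i hi => absurd (Finset.mem_univ i) hi)
  intro s
  induction s using Finset.induction_on with
  | empty =>
    intro v hv
    have : v = 0 := by funext i; exact hv i (Finset.notMem_empty i)
    rw [this]
    have : transPerm (0 : cube n) = 1 := by
      apply Equiv.ext; intro x; rw [transPerm_apply]; simp
    rw [this]; exact one_mem _
  | @insert a s ha ih =>
    intro v hv
    set u := Function.update v a 0 with hu
    have hmem : transPerm u ∈ H n := by
      apply ih
      intro i hi
      by_cases hia : i = a
      · subst hia; simp [hu]
      · rw [hu, Function.update_of_ne hia]
        exact hv i (by simp [hia, hi])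
    rcases z2 (v a) with h0 | h1
    · have : u = v := by
        funext i; by_cases hia : i = a
        · subst hia; rw [hu, Function.update_self, h0]
        · rw [hu, Function.update_of_ne hia]
      rwa [this] at hmem
    · have hv' : v = u + unitv a := by
        funext i
        by_cases hia : i = a
        · subst hia; simp [hu, h1]
        · simp [hu, Function.update_of_ne hia, unitv_ne hia]
      have : transPerm v = transPerm u * transPerm (unitv a) := by
        apply Equiv.ext; intro x
        simp only [Equiv.Perm.mul_apply, transPerm_apply, hv']
        funext i; simp; ring
      rw [this]
      exact mul_mem hmem (transPerm_unit a ▸ gate_mem (by simp) (Finset.notMem_empty a))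

/-- relabelling of wires as permutation of the cube -/
def wireHom : Equiv.Perm (Fin n) →* Equiv.Perm (cube n) where
  toFun σ := Equiv.arrowCongr σ (Equiv.refl (ZMod 2))
  map_one' := by apply Equiv.ext; intro x; rfl
  map_mul' σ τ := by apply Equiv.ext; intro x; rfl

lemma wireHom_apply (σ : Equiv.Perm (Fin n)) (x : cube n) (i : Fin n) :
    wireHom σ x i = x (σ⁻¹ i) := rfl

lemma wireHom_unit (σ : Equiv.Perm (Fin n)) (s : Fin n) :
    wireHom σ (unitv s) = unitv (σ s) := by
  funext i
  rw [wireHom_apply]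
  by_cases h : i = σ s
  · subst h; simp
  · rw [unitv_ne h, unitv_ne]
    intro hc
    exact h (by rw [← hc]; simp)

lemma wireHom_zero (σ : Equiv.Perm (Fin n)) : wireHom σ 0 = 0 := rfl

lemma wireHom_swap_mem {s t : Fin n} (hst : s ≠ t) : wireHom (Equiv.swap s t) ∈ H n := by
  have hts : t ≠ s := hst.symm
  have hC1 : kcnot n {s} t ∈ H n := gate_mem (by simp) (by simp [hts])
  have hC2 : kcnot n {t} s ∈ H n := gate_mem (by simp) (by simp [hst])
  have hid : wireHom (Equiv.swap s t) = kcnot n {s} t * kcnot n {t} s * kcnot n {s} t := by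
    apply Equiv.ext; intro x
    simp only [Equiv.Perm.mul_apply, kcnot_apply,
      Finset.erase_eq_of_notMem (show (t:Fin n) ∉ ({s}:Finset (Fin n)) by simp [hts]),
      Finset.erase_eq_of_notMem (show (s:Fin n) ∉ ({t}:Finset (Fin n)) by simp [hst]),
      Finset.prod_singleton]
    funext i
    rw [wireHom_apply]
    by_cases hit : i = t
    · subst hit
      rw [show (Equiv.swap s i)⁻¹ i = s by simp]
      simp only [Function.update_self, Function.update_of_ne hts, Function.update_of_ne hst,
        Function.update_self]
      have h2 : (2:ZMod 2) = 0 := by decide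
      have h3 : (3:ZMod 2) = 1 := by decide
      ring_nf
      simp only [h2, h3, mul_zero, zero_add, add_zero, mul_one, one_mul]
    · by_cases his : i = s
      · subst his
        rw [show (Equiv.swap i t)⁻¹ i = t by simp]
        simp only [Function.update_of_ne hit, Function.update_self, Function.update_of_ne hts,
          Function.update_of_ne hst]
        have h2 : (2:ZMod 2) = 0 := by decide
        have h3 : (3:ZMod 2) = 1 := by decide
        ring_nf
        simp only [h2, h3, mul_zero, zero_add, add_zero, mul_one, one_mul]
      · rw [show (Equiv.swap s t)⁻¹ i = i by simp [Equiv.swap_apply_of_ne_of_ne his hit]]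
        simp only [Function.update_of_ne hit, Function.update_of_ne his]
  rw [hid]
  exact mul_mem (mul_mem hC1 hC2) hC1

lemma wireHom_mem (σ : Equiv.Perm (Fin n)) : wireHom σ ∈ H n := by
  have : σ ∈ (H n).comap (wireHom (n := n)) := by
    have htop : σ ∈ Subgroup.closure {τ : Equiv.Perm (Fin n) | τ.IsSwap} := by
      rw [Equiv.Perm.closure_isSwap]; trivial
    refine Subgroup.closure_le _ |>.mpr ?_ htop
    rintro τ ⟨a, b, hab, rfl⟩
    exact wireHom_swap_mem hab
  exact this


lemma cnot_apply {s t : Fin n} (hst : s ≠ t) (x : cube n) :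
    kcnot n {s} t x = Function.update x t (x t + x s) := by
  rw [kcnot_apply, Finset.erase_eq_of_notMem (by simp [hst.symm]), Finset.prod_singleton]

lemma unitv_ne_zero (i : Fin n) : unitv i ≠ 0 := by
  intro h
  have := congrFun h i
  simp [unitv] at this

/-- Gaussian elimination: any vector supported in `A` can be moved to a unit vector
by elements of `H n` that fix everything vanishing on `A`. -/
lemma gauss (A : Finset (Fin n)) (u : cube n) (hA : ∀ i, i ∉ A → u i = 0) (hu : u ≠ 0) :
    ∃ h ∈ H n, (∃ s ∈ A, h u = unitv s) ∧ ∀ x : cube n, (∀ i ∈ A, x i = 0) → h x = x := by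
  -- strong induction on the number of nonzero coordinates
  suffices key : ∀ (N : ℕ) (u : cube n), (Finset.univ.filter (fun i => u i ≠ 0)).card ≤ N →
      (∀ i, i ∉ A → u i = 0) → u ≠ 0 →
      ∃ h ∈ H n, (∃ s ∈ A, h u = unitv s) ∧ ∀ x : cube n, (∀ i ∈ A, x i = 0) → h x = x by
    exact key _ u le_rfl hA hu
  intro N
  induction N with
  | zero =>
    intro u hcard hA hu
    exfalso
    apply hu
    funext i
    show u i = 0
    by_contra hi
    have : i ∈ Finset.univ.filter (fun i => u i ≠ 0) := by simp [hi]
    have := Finset.card_pos.mpr ⟨i, this⟩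
    omega
  | succ N ih =>
    intro u hcard hA hu
    set F := Finset.univ.filter (fun i => u i ≠ 0) with hF
    have hFne : F.Nonempty := by
      by_contra hne
      apply hu
      funext i
      show u i = 0
      by_contra hi
      exact hne ⟨i, by simp [hF, hi]⟩
    have hFA : ∀ i ∈ F, i ∈ A := by
      intro i hi
      simp only [hF, Finset.mem_filter] at hi
      by_contra hiA
      exact hi.2 (hA i hiA)
    by_cases h1 : F.card ≤ 1
    · -- u is a unit vector
      obtain ⟨s, hs⟩ := hFne
      have hFs : F = {s} := by
        apply Finset.eq_singleton_iff_unique_mem.mpr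
        refine ⟨hs, fun t ht => ?_⟩
        by_contra hts
        have := Finset.one_lt_card.mpr ⟨t, ht, s, hs, hts⟩
        omega
      have hus : u = unitv s := by
        funext i
        by_cases his : i = s
        · subst his
          have : u i ≠ 0 := by
            have := hs; rw [hFs] at this
            simpa [hF, Finset.mem_filter] using hs
          simp [z2ne _ this]
        · have : i ∉ F := by rw [hFs]; simp [his]
          simp only [hF, Finset.mem_filter, Finset.mem_univ, true_and, not_not] at this
          simp [this, unitv_ne his]
      exact ⟨1, one_mem _, ⟨s, hFA s hs, by simp [hus]⟩, fun x _ => rfl⟩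
    · -- at least two nonzero coordinates: use a CNOT to kill one
      push_neg at h1
      obtain ⟨s, hs, t, ht, hst⟩ := Finset.one_lt_card.mp h1
      have hus : u s = 1 := z2ne _ (by simpa [hF, Finset.mem_filter] using hs)
      have hut : u t = 1 := z2ne _ (by simpa [hF, Finset.mem_filter] using ht)
      set C := kcnot n {s} t with hC
      have hCmem : C ∈ H n := gate_mem (by simp) (by simp [hst.symm])
      set u' := C u with hu'
      have hu'def : u' = Function.update u t 0 := by
        rw [hu', hC, cnot_apply hst, hus, hut]
        rw [show (1:ZMod 2)+1 = 0 by decide]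
      have hcard' : (Finset.univ.filter (fun i => u' i ≠ 0)).card ≤ N := by
        have hsub : Finset.univ.filter (fun i => u' i ≠ 0) ⊆ F.erase t := by
          intro i hi
          simp only [Finset.mem_filter, Finset.mem_univ, true_and] at hi
          rw [hu'def] at hi
          rcases eq_or_ne i t with rfl | hit
          · simp at hi
          · rw [Function.update_of_ne hit] at hi
            exact Finset.mem_erase.mpr ⟨hit, by simp [hF, hi]⟩
        have := Finset.card_le_card hsub
        have := Finset.card_erase_of_mem ht
        omega
      have hA' : ∀ i, i ∉ A → u' i = 0 := by
        intro i hiA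
        rw [hu'def]
        rcases eq_or_ne i t with rfl | hit
        · simp
        · rw [Function.update_of_ne hit]; exact hA i hiA
      have hu'ne : u' ≠ 0 := by
        intro h0
        have := congrFun h0 s
        rw [hu'def, Function.update_of_ne hst, hus] at this
        simpa using this
      obtain ⟨h, hmem, ⟨s', hs'A, hs'⟩, hfix⟩ := ih u' hcard' hA' hu'ne
      refine ⟨h * C, mul_mem hmem hCmem, ⟨s', hs'A, by
        simp only [Equiv.Perm.mul_apply]; rw [← hu', hs']⟩, ?_⟩
      intro x hx
      have hCx : C x = x := by
        rw [hC, cnot_apply hst, hx s (hFA s hs), add_zero, Function.update_eq_self]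
      simp only [Equiv.Perm.mul_apply, hCx]
      exact hfix x hx


lemma two_trans (i0 : Fin n) (a b : cube n) (hab : a ≠ b) :
    ∃ h ∈ H n, h a = 0 ∧ h b = unitv i0 := by
  set t := transPerm a with ht
  have hta : t a = 0 := by rw [ht, transPerm_apply, add_self_cube]
  set u := b + a with hu
  have hune : u ≠ 0 := by
    intro h0
    apply hab
    have := congrArg (· + a) h0
    simpa [add_assoc, add_self_cube] using (by
      funext i
      have := congrFun h0 i
      have h2 := z2add (a i)
      -- b i + a i = 0 → b i = a i
      rcases z2 (a i) with h | h <;> rcases z2 (b i) with h' | h' <;>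
        simp [h, h'] at this ⊢ <;> simp [hu, h, h'] at this <;> tauto)
  obtain ⟨g, hgmem, ⟨s, _, hgu⟩, hgfix⟩ := gauss Finset.univ u (fun i hi => absurd (Finset.mem_univ i) hi) hune
  have hg0 : g 0 = 0 := hgfix 0 (fun i _ => rfl)
  set W := wireHom (Equiv.swap s i0) with hW
  refine ⟨W * g * t, mul_mem (mul_mem (wireHom_mem _) hgmem) (transPerm_mem a), ?_, ?_⟩
  · simp only [Equiv.Perm.mul_apply, hta, hg0]
    exact wireHom_zero _
  · simp only [Equiv.Perm.mul_apply]
    rw [ht, transPerm_apply, ← hu, hgu, hW, wireHom_unit, Equiv.swap_apply_left]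

lemma cancel_cube : ∀ x y : cube n, x + y = 0 → x = y := by
  intro x y h0
  funext i
  have := congrFun h0 i
  rcases z2 (x i) with h | h <;> rcases z2 (y i) with h' | h' <;>
    simp [h, h'] at this ⊢

lemma three_trans (i0 i1 : Fin n) (h01 : i0 ≠ i1) (a b c : cube n)
    (hab : a ≠ b) (hac : a ≠ c) (hbc : b ≠ c) :
    ∃ h ∈ H n, h a = 0 ∧ h b = unitv i0 ∧ h c = unitv i1 := by
  set t := transPerm a with ht
  have hta : t a = 0 := by rw [ht, transPerm_apply, add_self_cube]
  set u := b + a with hu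
  set v := c + a with hv
  have hune : u ≠ 0 := fun h0 => hab (cancel_cube b a h0).symm
  have hvne : v ≠ 0 := fun h0 => hac (cancel_cube c a h0).symm
  have huv : u ≠ v := by
    intro h0
    apply hbc
    have := congrArg (· + a) h0
    simpa [hu, hv, add_assoc, add_self_cube] using this
  -- step 1: move u to a unit vector
  obtain ⟨g, hgmem, ⟨s, _, hgu⟩, hgfix⟩ :=
    gauss Finset.univ u (fun i hi => absurd (Finset.mem_univ i) hi) hune
  have hg0 : g 0 = 0 := hgfix 0 (fun i _ => rfl)
  set W1 := wireHom (Equiv.swap s i0) with hW1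
  have hW10 : W1 0 = 0 := wireHom_zero _
  have hW1u : W1 (unitv s) = unitv i0 := by rw [hW1, wireHom_unit, Equiv.swap_apply_left]
  set v2 := W1 (g v) with hv2
  have hv2ne : v2 ≠ 0 := by
    rw [hv2, ← hW10]
    intro h0
    exact hvne (by rw [← hg0] at h0; exact (g.injective (W1.injective h0)))
  have hv2nu : v2 ≠ unitv i0 := by
    rw [hv2, ← hW1u, ← hgu]
    intro h0
    exact huv (g.injective (W1.injective h0.symm))
  -- find a nonzero coordinate of v2 away from i0
  have hex : ∃ t', t' ≠ i0 ∧ v2 t' ≠ 0 := by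
    by_contra hno
    push_neg at hno
    rcases z2 (v2 i0) with h | h
    · apply hv2ne
      funext i
      rcases eq_or_ne i i0 with rfl | hii
      · simpa using h
      · simpa using hno i hii
    · apply hv2nu
      funext i
      rcases eq_or_ne i i0 with rfl | hii
      · simp [h]
      · simp [hno i hii, unitv_ne hii]
  obtain ⟨t', ht'i0, ht'ne⟩ := hex
  -- step 2: clear coordinate i0 of v2 (keeping 0 and unitv i0 fixed)
  have hstep2 : ∃ k ∈ H n, k 0 = 0 ∧ k (unitv i0) = unitv i0 ∧
      (k v2) i0 = 0 ∧ k v2 ≠ 0 := by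
    rcases z2 (v2 i0) with h | h
    · exact ⟨1, one_mem _, rfl, rfl, by simpa using h, by simpa using hv2ne⟩
    · set C := kcnot n {t'} i0 with hC
      have hCmem : C ∈ H n := gate_mem (by simp) (by simp [ht'i0.symm])
      refine ⟨C, hCmem, ?_, ?_, ?_, ?_⟩
      · rw [hC, cnot_apply ht'i0]
        funext i
        rcases eq_or_ne i i0 with rfl | hii
        · simp
        · simp [Function.update_of_ne hii]
      · rw [hC, cnot_apply ht'i0, unitv_ne ht'i0, add_zero, Function.update_eq_self]
      · rw [hC, cnot_apply ht'i0, Function.update_self, h, z2ne _ ht'ne]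
        decide
      · intro h0
        have := congrFun h0 t'
        rw [hC, cnot_apply ht'i0, Function.update_of_ne ht'i0] at this
        exact ht'ne (by simpa using this)
  obtain ⟨k, hkmem, hk0, hki0, hkv0, hkvne⟩ := hstep2
  set v3 := k v2 with hv3
  -- step 3: move v3 (supported away from i0) to a unit vector, fixing 0 and unitv i0
  have hA3 : ∀ i, i ∉ Finset.univ.erase i0 → v3 i = 0 := by
    intro i hi
    simp only [Finset.mem_erase, Finset.mem_univ, and_true] at hi
    push_neg at hi
    rw [hi]
    exact hkv0
  obtain ⟨g2, hg2mem, ⟨s', hs'A, hg2v⟩, hg2fix⟩ := gauss (Finset.univ.erase i0) v3 hA3 hkvne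
  have hs'i0 : s' ≠ i0 := (Finset.mem_erase.mp hs'A).1
  have hg20 : g2 0 = 0 := hg2fix 0 (fun i _ => rfl)
  have hg2i0 : g2 (unitv i0) = unitv i0 :=
    hg2fix (unitv i0) (fun i hi => unitv_ne (Finset.mem_erase.mp hi).1)
  set W2 := wireHom (Equiv.swap s' i1) with hW2
  have hW20 : W2 0 = 0 := wireHom_zero _
  have hW2i0 : W2 (unitv i0) = unitv i0 := by
    rw [hW2, wireHom_unit, Equiv.swap_apply_of_ne_of_ne (Ne.symm hs'i0) h01]
  have hW2s' : W2 (unitv s') = unitv i1 := by rw [hW2, wireHom_unit, Equiv.swap_apply_left]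
  refine ⟨W2 * g2 * k * W1 * g * t,
    mul_mem (mul_mem (mul_mem (mul_mem (mul_mem (wireHom_mem _) hg2mem) hkmem)
      (wireHom_mem _)) hgmem) (transPerm_mem a), ?_, ?_, ?_⟩
  · simp only [Equiv.Perm.mul_apply, hta, hg0, hW10, hk0, hg20, hW20]
  · simp only [Equiv.Perm.mul_apply]
    rw [ht, transPerm_apply, ← hu, hgu, hW1u, hki0, hg2i0, hW2i0]
  · simp only [Equiv.Perm.mul_apply]
    rw [ht, transPerm_apply, ← hv, ← hv2, ← hv3, hg2v, hW2s']


lemma kcnot_invol (I : Finset (Fin n)) (j : Fin n) (x : cube n) :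
    kcnot n I j (kcnot n I j x) = x := by
  have h := Function.Involutive.toPerm_involutive
    (f := fun x : cube n => Function.update x j (x j + ∏ i ∈ I.erase j, x i))
  exact h _ x

section Theta

variable (i0 i1 i2 : Fin n)

/-- the all-ones vector away from `i0, i1` -/
def vN (i0 i1 : Fin n) : cube n := fun i => if i = i0 ∨ i = i1 then 0 else 1

/-- the double transposition `D` -/
def Dperm (i0 i1 : Fin n) : Equiv.Perm (cube n) :=
  transPerm (vN i0 i1) * kcnot n (Finset.univ \ {i0, i1}) i0 * transPerm (vN i0 i1)

lemma Dperm_mem (h01 : i0 ≠ i1) : Dperm i0 i1 ∈ H n := by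
  refine mul_mem (mul_mem (transPerm_mem _) (kcnot_mem _ _ ?_ ?_)) (transPerm_mem _)
  · simp
  · rw [Finset.card_sdiff_of_subset (Finset.subset_univ _), Finset.card_univ, Fintype.card_fin,
      Finset.card_pair h01]
    have : 2 ≤ n := by
      have := i0.2; have := i1.2
      rcases Nat.lt_or_ge n 2 with h | h
      · interval_cases n
        · omega
        · exact absurd (Fin.ext (by omega)) h01
      · omega
    omega

lemma Dperm_apply_of (x : cube n) (hx : ∀ i, i ≠ i0 → i ≠ i1 → x i = 0) :
    Dperm i0 i1 x = Function.update x i0 (x i0 + 1) := by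
  simp only [Dperm, Equiv.Perm.mul_apply, transPerm_apply, kcnot_apply]
  have hR : (Finset.univ \ ({i0, i1} : Finset (Fin n))).erase i0
      = Finset.univ \ {i0, i1} := by
    apply Finset.erase_eq_of_notMem
    simp
  rw [hR]
  have hprod : ∏ i ∈ Finset.univ \ ({i0, i1} : Finset (Fin n)), (x + vN i0 i1) i = 1 := by
    apply Finset.prod_eq_one
    intro i hi
    simp only [Finset.mem_sdiff, Finset.mem_insert, Finset.mem_singleton, not_or] at hi
    simp [Pi.add_apply, vN, hi.2.1, hi.2.2, hx i hi.2.1 hi.2.2]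
  rw [hprod]
  funext i
  rcases eq_or_ne i i0 with rfl | hii
  · simp [Function.update_self, vN, Pi.add_apply]
  · simp only [Pi.add_apply, Function.update_of_ne hii]
    have : (x + vN i0 i1) i + vN i0 i1 i = x i := by
      simp [Pi.add_apply, add_assoc, z2add (vN i0 i1 i)]
    simpa [Pi.add_apply] using this

lemma Dperm_apply_of_not (x : cube n) (hx : ¬ ∀ i, i ≠ i0 → i ≠ i1 → x i = 0) :
    Dperm i0 i1 x = x := by
  simp only [Dperm, Equiv.Perm.mul_apply, transPerm_apply, kcnot_apply]
  have hR : (Finset.univ \ ({i0, i1} : Finset (Fin n))).erase i0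
      = Finset.univ \ {i0, i1} := by
    apply Finset.erase_eq_of_notMem
    simp
  rw [hR]
  push_neg at hx
  obtain ⟨i, hii0, hii1, hxi⟩ := hx
  have hprod : ∏ i ∈ Finset.univ \ ({i0, i1} : Finset (Fin n)), (x + vN i0 i1) i = 0 := by
    apply Finset.prod_eq_zero (i := i) (by simp [hii0, hii1])
    have := z2ne _ hxi
    simp [Pi.add_apply, vN, hii0, hii1, this]
    decide
  rw [hprod, add_zero, Function.update_eq_self]
  funext i
  simp [Pi.add_apply, add_assoc, z2add (vN i0 i1 i)]


variable {i0 i1 i2}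

/-- coordinates outside `{i0,i1,i2}` vanish -/
def Zc (i0 i1 i2 : Fin n) (x : cube n) : Prop :=
  ∀ i, i ≠ i0 → i ≠ i1 → i ≠ i2 → x i = 0

lemma g_apply (h01 : i0 ≠ i1) (h02 : i0 ≠ i2) (h12 : i1 ≠ i2) (x : cube n) :
    kcnot n {i0, i1} i2 x = Function.update x i2 (x i2 + x i0 * x i1) := by
  rw [kcnot_apply, Finset.erase_eq_of_notMem (by simp [h02.symm, h12.symm]),
    Finset.prod_pair h01]

lemma d2_of (h01 : i0 ≠ i1) (h02 : i0 ≠ i2) (h12 : i1 ≠ i2) (x : cube n)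
    (hZ : Zc i0 i1 i2 x) (hbc : x i1 = x i2) :
    (kcnot n {i1} i2 * Dperm i0 i1 * kcnot n {i1} i2) x
      = Function.update x i0 (x i0 + 1) := by
  simp only [Equiv.Perm.mul_apply]
  set y := Function.update x i2 (x i2 + x i1) with hy
  rw [show (kcnot n {i1} i2) x = y from cnot_apply h12 x]
  have hyi2 : y i2 = x i2 + x i1 := Function.update_self _ _ _
  have hyne : ∀ i, i ≠ i2 → y i = x i := fun i hi => Function.update_of_ne hi _ _
  have hcond : ∀ i, i ≠ i0 → i ≠ i1 → y i = 0 := by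
    intro i hi0 hi1
    rcases eq_or_ne i i2 with rfl | hii2
    · rw [hyi2, hbc, z2add]
    · rw [hyne i hii2]; exact hZ i hi0 hi1 hii2
  rw [Dperm_apply_of _ _ _ hcond]
  rw [cnot_apply h12]
  set w := Function.update y i0 (y i0 + 1) with hw
  have hwi2 : w i2 = x i2 + x i1 := by rw [hw, Function.update_of_ne h02.symm, hyi2]
  have hwi1 : w i1 = x i1 := by rw [hw, Function.update_of_ne h01.symm, hyne _ h12]
  funext i
  rcases eq_or_ne i i2 with rfl | hii2
  · rw [Function.update_self, hwi2, hwi1, Function.update_of_ne h02.symm,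
      add_assoc, z2add, add_zero]
  · rw [Function.update_of_ne hii2]
    rcases eq_or_ne i i0 with rfl | hii0
    · rw [hw, Function.update_self, Function.update_self, hyne _ h02]
    · rw [hw, Function.update_of_ne hii0, hyne _ hii2, Function.update_of_ne hii0]

lemma d2_of_not (h01 : i0 ≠ i1) (h02 : i0 ≠ i2) (h12 : i1 ≠ i2) (x : cube n)
    (hx : ¬ (Zc i0 i1 i2 x ∧ x i1 = x i2)) :
    (kcnot n {i1} i2 * Dperm i0 i1 * kcnot n {i1} i2) x = x := by
  simp only [Equiv.Perm.mul_apply]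
  have hcond : ¬ ∀ i, i ≠ i0 → i ≠ i1 → (kcnot n {i1} i2 x) i = 0 := by
    rw [cnot_apply h12]
    intro hc
    apply hx
    constructor
    · intro i hi0 hi1 hi2
      have := hc i hi0 hi1
      rwa [Function.update_of_ne hi2] at this
    · have := hc i2 h02.symm h12.symm
      rw [Function.update_self] at this
      rcases z2 (x i1) with h | h <;> rcases z2 (x i2) with h' | h' <;>
        rw [h, h'] at this ⊢ <;> first | rfl | (exfalso; revert this; decide)
  rw [Dperm_apply_of_not _ _ _ hcond, kcnot_invol]

lemma d1_of (h01 : i0 ≠ i1) (h02 : i0 ≠ i2) (h12 : i1 ≠ i2) (x : cube n)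
    (hZ : Zc i0 i1 i2 x) (hc : x i2 = x i0 * x i1) :
    (kcnot n {i0, i1} i2 * Dperm i0 i1 * kcnot n {i0, i1} i2) x
      = Function.update (Function.update x i0 (x i0 + 1)) i2 (x i2 + x i1) := by
  simp only [Equiv.Perm.mul_apply]
  set y := Function.update x i2 (x i2 + x i0 * x i1) with hy
  rw [show (kcnot n {i0, i1} i2) x = y from g_apply h01 h02 h12 x]
  have hyi2 : y i2 = x i2 + x i0 * x i1 := Function.update_self _ _ _
  have hyne : ∀ i, i ≠ i2 → y i = x i := fun i hi => Function.update_of_ne hi _ _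
  have hcond : ∀ i, i ≠ i0 → i ≠ i1 → y i = 0 := by
    intro i hi0 hi1
    rcases eq_or_ne i i2 with rfl | hii2
    · rw [hyi2, hc, z2add]
    · rw [hyne i hii2]; exact hZ i hi0 hi1 hii2
  rw [Dperm_apply_of _ _ _ hcond]
  rw [g_apply h01 h02 h12]
  set w := Function.update y i0 (y i0 + 1) with hw
  have hwi2 : w i2 = x i2 + x i0 * x i1 := by rw [hw, Function.update_of_ne h02.symm, hyi2]
  have hwi1 : w i1 = x i1 := by rw [hw, Function.update_of_ne h01.symm, hyne _ h12]
  have hwi0 : w i0 = x i0 + 1 := by rw [hw, Function.update_self, hyne _ h02]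
  funext i
  rcases eq_or_ne i i2 with rfl | hii2
  · rw [Function.update_self, Function.update_self, hwi2, hwi0, hwi1]
    ring_nf
    rw [show (2:ZMod 2) = 0 by decide]
    ring
  · rw [Function.update_of_ne hii2, Function.update_of_ne hii2]
    rcases eq_or_ne i i0 with rfl | hii0
    · rw [hw, Function.update_self, Function.update_self, hyne _ h02]
    · rw [hw, Function.update_of_ne hii0, hyne _ hii2, Function.update_of_ne hii0]

lemma d1_of_not (h01 : i0 ≠ i1) (h02 : i0 ≠ i2) (h12 : i1 ≠ i2) (x : cube n)
    (hx : ¬ (Zc i0 i1 i2 x ∧ x i2 = x i0 * x i1)) :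
    (kcnot n {i0, i1} i2 * Dperm i0 i1 * kcnot n {i0, i1} i2) x = x := by
  simp only [Equiv.Perm.mul_apply]
  have hcond : ¬ ∀ i, i ≠ i0 → i ≠ i1 → (kcnot n {i0, i1} i2 x) i = 0 := by
    rw [g_apply h01 h02 h12]
    intro hc
    apply hx
    constructor
    · intro i hi0 hi1 hi2
      have := hc i hi0 hi1
      rwa [Function.update_of_ne hi2] at this
    · have := hc i2 h02.symm h12.symm
      rw [Function.update_self] at this
      rcases z2 (x i2) with h | h <;> rcases z2 (x i0 * x i1) with h' | h' <;>
        rw [h, h'] at this ⊢ <;> first | rfl | (exfalso; revert this; decide)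
  rw [Dperm_apply_of_not _ _ _ hcond, kcnot_invol]

/-- the explicit 3-cycle -/
def theta (i0 i1 i2 : Fin n) : Equiv.Perm (cube n) :=
  (kcnot n {i0, i1} i2 * Dperm i0 i1 * kcnot n {i0, i1} i2) *
  (kcnot n {i1} i2 * Dperm i0 i1 * kcnot n {i1} i2)

lemma theta_mem (h01 : i0 ≠ i1) (h02 : i0 ≠ i2) (h12 : i1 ≠ i2) : theta i0 i1 i2 ∈ H n := by
  have hg : kcnot n {i0, i1} i2 ∈ H n := by
    apply gate_mem
    · exact Finset.card_insert_le _ _ |>.trans (by simp)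
    · simp [h02.symm, h12.symm]
  have hg' : kcnot n {i1} i2 ∈ H n := gate_mem (by simp) (by simp [h12.symm])
  exact mul_mem (mul_mem (mul_mem hg (Dperm_mem _ _ h01)) hg)
    (mul_mem (mul_mem hg' (Dperm_mem _ _ h01)) hg')


def pt2 (i0 i1 i2 : Fin n) : cube n := unitv i0 + unitv i1 + unitv i2
def pt3 (i1 i2 : Fin n) : cube n := unitv i1 + unitv i2

lemma pt2_i0 (h01 : i0 ≠ i1) (h02 : i0 ≠ i2) : pt2 i0 i1 i2 i0 = 1 := by
  simp [pt2, unitv_same, unitv_ne h01, unitv_ne h02]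
lemma pt2_i1 (h01 : i0 ≠ i1) (h12 : i1 ≠ i2) : pt2 i0 i1 i2 i1 = 1 := by
  simp [pt2, unitv_same, unitv_ne h01.symm, unitv_ne h12]
lemma pt2_i2 (h02 : i0 ≠ i2) (h12 : i1 ≠ i2) : pt2 i0 i1 i2 i2 = 1 := by
  simp [pt2, unitv_same, unitv_ne h02.symm, unitv_ne h12.symm]
lemma pt3_i0 (h01 : i0 ≠ i1) (h02 : i0 ≠ i2) : pt3 i1 i2 i0 = 0 := by
  simp [pt3, unitv_ne h01, unitv_ne h02]
lemma pt3_i1 (h12 : i1 ≠ i2) : pt3 i1 i2 i1 = 1 := by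
  simp [pt3, unitv_same, unitv_ne h12]
lemma pt3_i2 (h12 : i1 ≠ i2) : pt3 i1 i2 i2 = 1 := by
  simp [pt3, unitv_same, unitv_ne h12.symm]

lemma zc_pt1 : Zc i0 i1 i2 (unitv i1) := fun _ _ hi1 _ => unitv_ne hi1
lemma zc_pt2 : Zc i0 i1 i2 (pt2 i0 i1 i2) := by
  intro i hi0 hi1 hi2
  simp [pt2, unitv_ne hi0, unitv_ne hi1, unitv_ne hi2]
lemma zc_pt3 : Zc i0 i1 i2 (pt3 i1 i2) := by
  intro i _ hi1 hi2
  simp [pt3, unitv_ne hi1, unitv_ne hi2]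

lemma zc_ext (x y : cube n) (hZx : Zc i0 i1 i2 x) (hZy : Zc i0 i1 i2 y)
    (e0 : x i0 = y i0) (e1 : x i1 = y i1) (e2 : x i2 = y i2) : x = y := by
  funext i
  rcases eq_or_ne i i0 with rfl | hi0
  · exact e0
  rcases eq_or_ne i i1 with rfl | hi1
  · exact e1
  rcases eq_or_ne i i2 with rfl | hi2
  · exact e2
  rw [hZx i hi0 hi1 hi2, hZy i hi0 hi1 hi2]

lemma theta_spec1 (h01 : i0 ≠ i1) (h02 : i0 ≠ i2) (h12 : i1 ≠ i2) :
    theta i0 i1 i2 (unitv i1) = pt2 i0 i1 i2 := by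
  have hB : (kcnot n {i1} i2 * Dperm i0 i1 * kcnot n {i1} i2) (unitv i1) = unitv i1 := by
    apply d2_of_not h01 h02 h12
    rintro ⟨-, h⟩
    rw [unitv_same, unitv_ne h12.symm] at h
    exact (by decide : (1:ZMod 2) ≠ 0) h
  have hA := d1_of h01 h02 h12 (unitv i1) zc_pt1
    (by rw [unitv_ne h12.symm, unitv_ne h01, unitv_same]; decide)
  rw [theta, Equiv.Perm.mul_apply, hB, hA]
  funext i
  rcases eq_or_ne i i2 with rfl | hi2
  · rw [Function.update_self, unitv_ne h12.symm, unitv_same, pt2_i2 h02 h12]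
    decide
  rw [Function.update_of_ne hi2]
  rcases eq_or_ne i i0 with rfl | hi0
  · rw [Function.update_self, unitv_ne h01, pt2_i0 h01 h02]
    decide
  rw [Function.update_of_ne hi0]
  rcases eq_or_ne i i1 with rfl | hi1
  · rw [unitv_same, pt2_i1 h01 h12]
  rw [unitv_ne hi1, (zc_pt2 i hi0 hi1 hi2 : pt2 i0 i1 i2 i = 0)]

lemma theta_spec2 (h01 : i0 ≠ i1) (h02 : i0 ≠ i2) (h12 : i1 ≠ i2) :
    theta i0 i1 i2 (pt2 i0 i1 i2) = pt3 i1 i2 := by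
  have hB : (kcnot n {i1} i2 * Dperm i0 i1 * kcnot n {i1} i2) (pt2 i0 i1 i2)
      = pt3 i1 i2 := by
    rw [d2_of h01 h02 h12 _ zc_pt2 (by rw [pt2_i1 h01 h12, pt2_i2 h02 h12])]
    funext i
    rcases eq_or_ne i i0 with rfl | hi0
    · rw [Function.update_self, pt2_i0 h01 h02, pt3_i0 h01 h02]
      decide
    rw [Function.update_of_ne hi0]
    rcases eq_or_ne i i1 with rfl | hi1
    · rw [pt2_i1 h01 h12, pt3_i1 h12]
    rcases eq_or_ne i i2 with rfl | hi2
    · rw [pt2_i2 h02 h12, pt3_i2 h12]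
    rw [zc_pt2 i hi0 hi1 hi2, zc_pt3 i hi0 hi1 hi2]
  have hA : (kcnot n {i0, i1} i2 * Dperm i0 i1 * kcnot n {i0, i1} i2) (pt3 i1 i2)
      = pt3 i1 i2 := by
    apply d1_of_not h01 h02 h12
    rintro ⟨-, h⟩
    rw [pt3_i0 h01 h02, pt3_i1 h12, pt3_i2 h12] at h
    exact (by decide : (1:ZMod 2) ≠ 0 * 1) h
  rw [theta, Equiv.Perm.mul_apply, hB, hA]

lemma theta_spec3 (h01 : i0 ≠ i1) (h02 : i0 ≠ i2) (h12 : i1 ≠ i2) :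
    theta i0 i1 i2 (pt3 i1 i2) = unitv i1 := by
  have hB : (kcnot n {i1} i2 * Dperm i0 i1 * kcnot n {i1} i2) (pt3 i1 i2)
      = pt2 i0 i1 i2 := by
    rw [d2_of h01 h02 h12 _ zc_pt3 (by rw [pt3_i1 h12, pt3_i2 h12])]
    funext i
    rcases eq_or_ne i i0 with rfl | hi0
    · rw [Function.update_self, pt3_i0 h01 h02, pt2_i0 h01 h02]
      decide
    rw [Function.update_of_ne hi0]
    rcases eq_or_ne i i1 with rfl | hi1
    · rw [pt3_i1 h12, pt2_i1 h01 h12]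
    rcases eq_or_ne i i2 with rfl | hi2
    · rw [pt3_i2 h12, pt2_i2 h02 h12]
    rw [zc_pt3 i hi0 hi1 hi2, zc_pt2 i hi0 hi1 hi2]
  have hA := d1_of h01 h02 h12 (pt2 i0 i1 i2) zc_pt2
    (by rw [pt2_i0 h01 h02, pt2_i1 h01 h12, pt2_i2 h02 h12]; decide)
  rw [theta, Equiv.Perm.mul_apply, hB, hA]
  funext i
  rcases eq_or_ne i i2 with rfl | hi2
  · rw [Function.update_self, pt2_i2 h02 h12, pt2_i1 h01 h12, unitv_ne h12.symm]
    decide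
  rw [Function.update_of_ne hi2]
  rcases eq_or_ne i i0 with rfl | hi0
  · rw [Function.update_self, pt2_i0 h01 h02, unitv_ne h01]
    decide
  rw [Function.update_of_ne hi0]
  rcases eq_or_ne i i1 with rfl | hi1
  · rw [pt2_i1 h01 h12, unitv_same]
  rw [zc_pt2 i hi0 hi1 hi2, unitv_ne hi1]

lemma theta_fix (h01 : i0 ≠ i1) (h02 : i0 ≠ i2) (h12 : i1 ≠ i2) (x : cube n)
    (hx1 : x ≠ unitv i1) (hx2 : x ≠ pt2 i0 i1 i2) (hx3 : x ≠ pt3 i1 i2) :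
    theta i0 i1 i2 x = x := by
  rw [theta, Equiv.Perm.mul_apply]
  by_cases hZ : Zc i0 i1 i2 x
  · rcases z2 (x i1) with b | b <;> rcases z2 (x i2) with c | c
    · -- x i1 = 0, x i2 = 0
      rw [d2_of h01 h02 h12 x hZ (by rw [b, c])]
      set y := Function.update x i0 (x i0 + 1) with hy
      have hZy : Zc i0 i1 i2 y := by
        intro i hi0 hi1 hi2
        rw [hy, Function.update_of_ne hi0]; exact hZ i hi0 hi1 hi2
      have hyi1 : y i1 = 0 := by rw [hy, Function.update_of_ne h01.symm, b]
      have hyi2 : y i2 = 0 := by rw [hy, Function.update_of_ne h02.symm, c]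
      rw [d1_of h01 h02 h12 y hZy (by rw [hyi2, hyi1, mul_zero])]
      funext i
      rcases eq_or_ne i i2 with rfl | hi2
      · rw [Function.update_self, hyi2, hyi1, c]; decide
      rw [Function.update_of_ne hi2]
      rcases eq_or_ne i i0 with rfl | hi0
      · rw [Function.update_self, hy, Function.update_self, add_assoc]
        rw [show (1:ZMod 2) + 1 = 0 by decide, add_zero]
      rw [Function.update_of_ne hi0, hy, Function.update_of_ne hi0]
    · -- x i1 = 0, x i2 = 1
      rw [d2_of_not h01 h02 h12 x (by rintro ⟨-, h⟩; rw [b, c] at h; exact (by decide : (0:ZMod 2) ≠ 1) h)]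
      rw [d1_of_not h01 h02 h12 x (by rintro ⟨-, h⟩; rw [b, c, mul_zero] at h; exact (by decide : (1:ZMod 2) ≠ 0) h)]
    · -- x i1 = 1, x i2 = 0 : must have x i0 = 1, else x = unitv i1
      rcases z2 (x i0) with a | a
      · exact absurd (zc_ext x (unitv i1) hZ zc_pt1
          (by rw [a, unitv_ne h01]) (by rw [b, unitv_same]) (by rw [c, unitv_ne h12.symm])) hx1
      · rw [d2_of_not h01 h02 h12 x (by rintro ⟨-, h⟩; rw [b, c] at h; exact (by decide : (1:ZMod 2) ≠ 0) h)]
        rw [d1_of_not h01 h02 h12 x (by rintro ⟨-, h⟩; rw [a, b, c, one_mul] at h; exact (by decide : (0:ZMod 2) ≠ 1) h)]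
    · -- x i1 = 1, x i2 = 1 : x = pt2 or pt3, contradiction
      rcases z2 (x i0) with a | a
      · exact absurd (zc_ext x (pt3 i1 i2) hZ zc_pt3
          (by rw [a, pt3_i0 h01 h02]) (by rw [b, pt3_i1 h12]) (by rw [c, pt3_i2 h12])) hx3
      · exact absurd (zc_ext x (pt2 i0 i1 i2) hZ zc_pt2
          (by rw [a, pt2_i0 h01 h02]) (by rw [b, pt2_i1 h01 h12]) (by rw [c, pt2_i2 h02 h12])) hx2
  · rw [d2_of_not h01 h02 h12 x (fun h => hZ h.1), d1_of_not h01 h02 h12 x (fun h => hZ h.1)]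

end Theta


lemma fin_ne {m : ℕ} {p q : ℕ} (hp : p < m) (hq : q < m) (hpq : p ≠ q) :
    (⟨p, hp⟩ : Fin m) ≠ ⟨q, hq⟩ := by
  intro h
  exact hpq (by simpa using congrArg Fin.val h)

lemma threeCycle_mem (hn : 4 ≤ n) {σ : Equiv.Perm (cube n)} (hσ : σ.IsThreeCycle) :
    σ ∈ H n := by
  set i0 : Fin n := ⟨0, by omega⟩ with hi0
  set i1 : Fin n := ⟨1, by omega⟩ with hi1
  set i2 : Fin n := ⟨2, by omega⟩ with hi2
  have h01 : i0 ≠ i1 := fin_ne _ _ (by omega)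
  have h02 : i0 ≠ i2 := fin_ne _ _ (by omega)
  have h12 : i1 ≠ i2 := fin_ne _ _ (by omega)
  -- extract the three points of the cycle
  have hs3 : σ.support.card = 3 := hσ.card_support
  obtain ⟨a, ha⟩ : σ.support.Nonempty := Finset.card_pos.mp (by omega)
  obtain ⟨b, hb⟩ : ∃ b, σ a = b := ⟨σ a, rfl⟩
  obtain ⟨c, hc⟩ : ∃ c, σ b = c := ⟨σ b, rfl⟩
  have hb_supp : b ∈ σ.support := hb ▸ Equiv.Perm.apply_mem_support.mpr ha
  have hc_supp : c ∈ σ.support := hc ▸ Equiv.Perm.apply_mem_support.mpr hb_supp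
  have hab : a ≠ b := by rw [← hb]; exact (Equiv.Perm.mem_support.mp ha).symm
  have hbc : b ≠ c := by rw [← hc]; exact (Equiv.Perm.mem_support.mp hb_supp).symm
  have hσ3 : σ ^ 3 = 1 := by
    rw [← hσ.orderOf]
    exact pow_orderOf_eq_one σ
  have hca : σ c = a := by
    have h3a : σ (σ (σ a)) = a := by
      have : (σ ^ 3) a = a := by rw [hσ3]; rfl
      simpa [pow_succ, Equiv.Perm.mul_apply] using this
    rw [← hc, ← hb]
    exact h3a
  have hac : a ≠ c := by
    rintro rfl
    exact (Equiv.Perm.mem_support.mp ha) hca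
  have habc_card : ({a, b, c} : Finset (cube n)).card = 3 := by
    rw [Finset.card_insert_of_notMem (by simp [hab, hac]),
      Finset.card_insert_of_notMem (by simp [hbc]), Finset.card_singleton]
  have hsub : ({a, b, c} : Finset (cube n)) ⊆ σ.support := by
    intro x hx
    simp only [Finset.mem_insert, Finset.mem_singleton] at hx
    rcases hx with rfl | rfl | rfl <;> assumption
  have hsupp : σ.support = {a, b, c} :=
    (Finset.eq_of_subset_of_card_le hsub (by omega)).symm
  -- pick an element of `H` carrying the canonical triple to `(a, b, c)`
  have hp12 : unitv i1 ≠ pt2 i0 i1 i2 := by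
    intro h
    have := congrFun h i0
    rw [unitv_ne h01, pt2_i0 h01 h02] at this
    exact (by decide : (0:ZMod 2) ≠ 1) this
  have hp13 : unitv i1 ≠ pt3 i1 i2 := by
    intro h
    have := congrFun h i2
    rw [unitv_ne h12.symm, pt3_i2 h12] at this
    exact (by decide : (0:ZMod 2) ≠ 1) this
  have hp23 : pt2 i0 i1 i2 ≠ pt3 i1 i2 := by
    intro h
    have := congrFun h i0
    rw [pt2_i0 h01 h02, pt3_i0 h01 h02] at this
    exact (by decide : (1:ZMod 2) ≠ 0) this
  obtain ⟨h1, h1mem, e1a, e1b, e1c⟩ := three_trans i0 i1 h01 a b c hab hac hbc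
  obtain ⟨h2, h2mem, e2a, e2b, e2c⟩ :=
    three_trans i0 i1 h01 (unitv i1) (pt2 i0 i1 i2) (pt3 i1 i2) hp12 hp13 hp23
  set h := h1⁻¹ * h2 with hh
  have hhmem : h ∈ H n := mul_mem (inv_mem h1mem) h2mem
  have hh1 : h (unitv i1) = a := by
    rw [hh, Equiv.Perm.mul_apply, e2a, ← e1a, Equiv.Perm.coe_inv, Equiv.symm_apply_apply]
  have hh2 : h (pt2 i0 i1 i2) = b := by
    rw [hh, Equiv.Perm.mul_apply, e2b, ← e1b, Equiv.Perm.coe_inv, Equiv.symm_apply_apply]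
  have hh3 : h (pt3 i1 i2) = c := by
    rw [hh, Equiv.Perm.mul_apply, e2c, ← e1c, Equiv.Perm.coe_inv, Equiv.symm_apply_apply]
  have hconj : σ = h * theta i0 i1 i2 * h⁻¹ := by
    apply Equiv.ext
    intro x
    simp only [Equiv.Perm.mul_apply]
    rcases eq_or_ne x a with rfl | hxa
    · rw [show h⁻¹ x = unitv i1 from by rw [← hh1, Equiv.Perm.coe_inv, Equiv.symm_apply_apply],
        theta_spec1 h01 h02 h12, hh2, hb]
    rcases eq_or_ne x b with rfl | hxb
    · rw [show h⁻¹ x = pt2 i0 i1 i2 from by rw [← hh2, Equiv.Perm.coe_inv, Equiv.symm_apply_apply],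
        theta_spec2 h01 h02 h12, hh3, hc]
    rcases eq_or_ne x c with rfl | hxc
    · rw [show h⁻¹ x = pt3 i1 i2 from by rw [← hh3, Equiv.Perm.coe_inv, Equiv.symm_apply_apply],
        theta_spec3 h01 h02 h12, hh1, hca]
    · have hfix : σ x = x := by
        apply Equiv.Perm.notMem_support.mp
        rw [hsupp]
        simp [hxa, hxb, hxc]
      rw [theta_fix h01 h02 h12 (h⁻¹ x)
          (fun hq => hxa (by rw [← hh1, ← hq, Equiv.Perm.coe_inv, Equiv.apply_symm_apply]))
          (fun hq => hxb (by rw [← hh2, ← hq, Equiv.Perm.coe_inv, Equiv.apply_symm_apply]))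
          (fun hq => hxc (by rw [← hh3, ← hq, Equiv.Perm.coe_inv, Equiv.apply_symm_apply])),
        Equiv.Perm.coe_inv, Equiv.apply_symm_apply, hfix]
  rw [hconj]
  exact mul_mem (mul_mem hhmem (theta_mem h01 h02 h12)) (inv_mem hhmem)

lemma alt_le_H (hn : 4 ≤ n) : alternatingGroup (cube n) ≤ H n := by
  rw [← Equiv.Perm.closure_three_cycles_eq_alternating]
  exact (Subgroup.closure_le _).mpr (fun σ hσ => threeCycle_mem hn hσ)

lemma H_le_alt (hn : 4 ≤ n) : H n ≤ alternatingGroup (cube n) :=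
  (Subgroup.closure_le _).mpr (fun g hg => gate_even hn hg)

lemma swap_mem (hn1 : 1 ≤ n) (hn3 : n ≤ 3) {σ : Equiv.Perm (cube n)}
    (hσ : σ.IsSwap) : σ ∈ H n := by
  set i0 : Fin n := ⟨0, by omega⟩ with hi0
  set w : cube n := fun _ => 1 with hw
  set w' : cube n := Function.update w i0 0 with hw'
  have hww' : w ≠ w' := by
    intro h
    have := congrFun h i0
    rw [hw', Function.update_self] at this
    exact (by decide : (1:ZMod 2) ≠ 0) this
  have hKmem : kcnot n (Finset.univ.erase i0) i0 ∈ H n := by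
    apply gate_mem
    · rw [Finset.card_erase_of_mem (Finset.mem_univ _), Finset.card_univ, Fintype.card_fin]
      omega
    · exact Finset.notMem_erase _ _
  have hK : kcnot n (Finset.univ.erase i0) i0 = Equiv.swap w w' := by
    apply Equiv.ext
    intro x
    rw [kcnot_apply, Finset.erase_idem]
    by_cases hx : ∀ i ∈ Finset.univ.erase i0, x i = 1
    · have hprod : ∏ i ∈ Finset.univ.erase i0, x i = 1 := Finset.prod_eq_one hx
      rw [hprod]
      rcases z2 (x i0) with h | h
      · have hxw' : x = w' := by
          funext i
          rcases eq_or_ne i i0 with rfl | hi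
          · rw [h, hw', Function.update_self]
          · rw [hx i (by simp [hi]), hw', Function.update_of_ne hi]
        rw [hxw', Equiv.swap_apply_right]
        funext i
        rcases eq_or_ne i i0 with rfl | hi
        · rw [Function.update_self, hw', Function.update_self]
          simp [hw]
        · rw [Function.update_of_ne hi, hw', Function.update_of_ne hi]
      · have hxw : x = w := by
          funext i
          rcases eq_or_ne i i0 with rfl | hi
          · rw [h]
          · exact hx i (by simp [hi])
        rw [hxw, Equiv.swap_apply_left]
        funext i
        rcases eq_or_ne i i0 with rfl | hi
        · rw [Function.update_self, hw', Function.update_self]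
          exact (by decide : (1:ZMod 2) + 1 = 0)
        · rw [Function.update_of_ne hi, hw', Function.update_of_ne hi]
    · push_neg at hx
      obtain ⟨i, hi, hxi⟩ := hx
      have hii0 : i ≠ i0 := (Finset.mem_erase.mp hi).1
      have hxi0 : x i = 0 := by
        rcases z2 (x i) with h | h
        · exact h
        · exact absurd h hxi
      have hprod : ∏ j ∈ Finset.univ.erase i0, x j = 0 :=
        Finset.prod_eq_zero hi hxi0
      rw [hprod, add_zero, Function.update_eq_self]
      rw [Equiv.swap_apply_of_ne_of_ne]
      · intro h
        exact hxi (by rw [h, hw])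
      · intro h
        apply hxi
        rw [h, hw', Function.update_of_ne hii0]
  obtain ⟨u, v, huv, rfl⟩ := hσ
  obtain ⟨g1, hg1mem, e1u, e1v⟩ := two_trans i0 u v huv
  obtain ⟨g2, hg2mem, e2u, e2v⟩ := two_trans i0 w w' hww'
  set g := g1⁻¹ * g2 with hg
  have hgmem : g ∈ H n := mul_mem (inv_mem hg1mem) hg2mem
  have hgw : g w = u := by
    rw [hg, Equiv.Perm.mul_apply, e2u, ← e1u, Equiv.Perm.coe_inv, Equiv.symm_apply_apply]
  have hgw' : g w' = v := by
    rw [hg, Equiv.Perm.mul_apply, e2v, ← e1v, Equiv.Perm.coe_inv, Equiv.symm_apply_apply]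
  have : Equiv.swap u v = g * kcnot n (Finset.univ.erase i0) i0 * g⁻¹ := by
    rw [hK, ← hgw, ← hgw']
    exact Equiv.swap_apply_apply g w w'
  rw [this]
  exact mul_mem (mul_mem hgmem hKmem) (inv_mem hgmem)

lemma top_le_H (hn1 : 1 ≤ n) (hn3 : n ≤ 3) :
    (⊤ : Subgroup (Equiv.Perm (cube n))) ≤ H n := by
  rw [← Equiv.Perm.closure_isSwap]
  exact (Subgroup.closure_le _).mpr (fun σ hσ => swap_mem hn1 hn3 hσ)

end Stmt8

/-- The subgroup generated by the gates of `Ω_n^2` is the alternating group for `n ≥ 4`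
and the full symmetric group for `1 ≤ n ≤ 3`. -/
theorem stmt8 (n : ℕ) :
    (4 ≤ n → Subgroup.closure (gateSet n) = alternatingGroup (Fin n → ZMod 2)) ∧
    (1 ≤ n → n ≤ 3 → Subgroup.closure (gateSet n) = (⊤ : Subgroup (Equiv.Perm (Fin n → ZMod 2)))) := by
  constructor
  · intro hn
    exact le_antisymm (Stmt8.H_le_alt hn) (Stmt8.alt_le_H hn)
  · intro hn1 hn3
    exact le_antisymm le_top (Stmt8.top_le_H hn1 hn3)
end

section
/- For every n ≥ 2 and every q ≥ n, F(n,q) equals the set of ALL maps Z2^n → Z2^n; that is, every function f : Z2^n → Z2^n is realized by some reversible circuit on n+q wires using q additional inputs. -/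
-- ===================== auxiliary development =====================

noncomputable section StmtNineAux

private lemma z2_add_self : ∀ u v : ZMod 2, u + v + v = u := by decide

private lemma z2_if1 : ∀ v : ZMod 2, (if v = 1 then (1 : ZMod 2) else 0) = v := by decide

private lemma z2_key : ∀ a b c p : ZMod 2, a + b * c + (b + p) * c = a + c * p := by decide

lemma kcnot_apply (m : ℕ) (I : Finset (Fin m)) (j : Fin m) (x : Fin m → ZMod 2) :
    kcnot m I j x = Function.update x j (x j + ∏ i ∈ I.erase j, x i) := rfl

lemma circuitPerm_nil {n : ℕ} :
    circuitPerm ([] : List (Equiv.Perm (Fin n → ZMod 2))) = 1 := rfl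

lemma circuitPerm_cons {n : ℕ} (g : Equiv.Perm (Fin n → ZMod 2))
    (l : List (Equiv.Perm (Fin n → ZMod 2))) (x : Fin n → ZMod 2) :
    circuitPerm (g :: l) x = circuitPerm l (g x) := by
  simp [circuitPerm, Equiv.Perm.mul_apply]

lemma circuitPerm_append {n : ℕ} (l1 l2 : List (Equiv.Perm (Fin n → ZMod 2)))
    (x : Fin n → ZMod 2) :
    circuitPerm (l1 ++ l2) x = circuitPerm l2 (circuitPerm l1 x) := by
  simp [circuitPerm, Equiv.Perm.mul_apply]

lemma map_update_prod {m : ℕ} (l : List (Fin m)) (y : Fin m → ZMod 2) (t : Fin m)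
    (v : ZMod 2) (h : t ∉ l) :
    (l.map (Function.update y t v)).prod = (l.map y).prod := by
  have h2 : ∀ a ∈ l, Function.update y t v a = y a := by
    intro a ha
    exact Function.update_of_ne (ne_of_mem_of_not_mem ha h) _ _
  rw [List.map_congr_left h2]

/-- multi-controlled NOT with controls `l`, target `t`, dirty ancilla `d`. -/
def mcx (m : ℕ) : List (Fin m) → Fin m → Fin m → List (Equiv.Perm (Fin m → ZMod 2))
  | [], t, _ => [kcnot m ∅ t]
  | [c], t, _ => [kcnot m {c} t]
  | c :: c' :: cs, t, d =>
      kcnot m {d, c} t ::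
        (mcx m (c' :: cs) d t ++ kcnot m {d, c} t :: mcx m (c' :: cs) d t)

lemma mcx_mem (m : ℕ) : ∀ (l : List (Fin m)) (t d : Fin m), t ∉ l → d ∉ l → t ≠ d →
    ∀ g ∈ mcx m l t d, g ∈ gateSet m := by
  intro l
  induction l with
  | nil =>
    intro t d _ _ _ g hg
    simp only [mcx, List.mem_singleton] at hg
    exact ⟨∅, t, by simp, by simp, hg⟩
  | cons c cs ih =>
    intro t d ht hd htd
    have htc : t ≠ c := fun e => ht (e ▸ List.mem_cons_self)
    cases cs with
    | nil =>
      intro g hg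
      simp only [mcx, List.mem_singleton] at hg
      exact ⟨{c}, t, by simp, by simp [htc], hg⟩
    | cons c' cs' =>
      intro g hg
      have hA : kcnot m {d, c} t ∈ gateSet m := by
        refine ⟨{d, c}, t, ?_, ?_, rfl⟩
        · exact (Finset.card_insert_le _ _).trans (by simp)
        · simp [htd, htc]
      have ht2 : t ∉ c' :: cs' := fun h => ht (List.mem_cons_of_mem c h)
      have hd2 : d ∉ c' :: cs' := fun h => hd (List.mem_cons_of_mem c h)
      simp only [mcx, List.mem_cons, List.mem_append, List.mem_cons] at hg
      rcases hg with h | h | h | h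
      · exact h ▸ hA
      · exact ih d t hd2 ht2 (Ne.symm htd) g h
      · exact h ▸ hA
      · exact ih d t hd2 ht2 (Ne.symm htd) g h

lemma mcx_sem (m : ℕ) : ∀ (l : List (Fin m)) (t d : Fin m), t ∉ l → d ∉ l → t ≠ d →
    ∀ x : Fin m → ZMod 2,
    circuitPerm (mcx m l t d) x = Function.update x t (x t + (l.map x).prod) := by
  intro l
  induction l with
  | nil =>
    intro t d _ _ _ x
    show circuitPerm [kcnot m ∅ t] x = _
    rw [circuitPerm_cons]
    simp [circuitPerm_nil, kcnot_apply]
  | cons c cs ih =>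
    intro t d ht hd htd x
    have htc : t ≠ c := fun e => ht (e ▸ List.mem_cons_self)
    have hdc : d ≠ c := fun e => hd (e ▸ List.mem_cons_self)
    cases cs with
    | nil =>
      show circuitPerm [kcnot m {c} t] x = _
      rw [circuitPerm_cons]
      simp [circuitPerm_nil, kcnot_apply,
        Finset.erase_eq_of_notMem (by simp [htc] : t ∉ ({c} : Finset (Fin m)))]
    | cons c' cs' =>
      have ht2 : t ∉ c' :: cs' := fun h => ht (List.mem_cons_of_mem c h)
      have hd2 : d ∉ c' :: cs' := fun h => hd (List.mem_cons_of_mem c h)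
      have herase : ({d, c} : Finset (Fin m)).erase t = {d, c} :=
        Finset.erase_eq_of_notMem (by simp [htd, htc])
      have hpair : ∀ y : Fin m → ZMod 2, ∏ i ∈ ({d, c} : Finset (Fin m)), y i = y d * y c :=
        fun y => Finset.prod_pair hdc
      show circuitPerm (kcnot m {d, c} t ::
        (mcx m (c' :: cs') d t ++ kcnot m {d, c} t :: mcx m (c' :: cs') d t)) x = _
      rw [circuitPerm_cons, circuitPerm_append, circuitPerm_cons]
      simp only [ih d t hd2 ht2 (Ne.symm htd), kcnot_apply, herase, hpair]
      simp only [map_update_prod _ _ _ _ ht2, map_update_prod _ _ _ _ hd2]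
      rw [List.map_cons, List.prod_cons]
      funext w
      rcases eq_or_ne w d with rfl | hwd
      · simp only [Function.update_self, Function.update_of_ne (Ne.symm htd),
          Function.update_of_ne htd]
        exact z2_add_self _ _
      · rcases eq_or_ne w t with rfl | hwt
        · simp only [Function.update_of_ne htd, Function.update_self,
            Function.update_of_ne (Ne.symm htd), Function.update_of_ne (Ne.symm htc),
            Function.update_of_ne (Ne.symm hdc)]
          exact z2_key _ _ _ _
        · simp only [Function.update_of_ne hwd, Function.update_of_ne hwt]

-- ===================== NOT flips =====================

def flips (m : ℕ) (L : List (Fin m)) : List (Equiv.Perm (Fin m → ZMod 2)) :=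
  L.map fun i => kcnot m ∅ i

lemma flips_sem (m : ℕ) (L : List (Fin m)) (hL : L.Nodup) (x : Fin m → ZMod 2) :
    circuitPerm (flips m L) x = fun w => x w + if w ∈ L then 1 else 0 := by
  induction L generalizing x with
  | nil => funext w; simp [flips, circuitPerm_nil]
  | cons i rest ih =>
    rw [show flips m (i :: rest) = kcnot m ∅ i :: flips m rest from rfl, circuitPerm_cons,
      ih (List.nodup_cons.mp hL).2, kcnot_apply]
    funext w
    rcases eq_or_ne w i with rfl | hwi
    · have hwrest : w ∉ rest := (List.nodup_cons.mp hL).1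
      simp [Function.update_self, hwrest]
    · simp [Function.update_of_ne hwi, hwi]

-- ===================== wires =====================

def ctrlList (n q : ℕ) : List (Fin (n + q)) := List.ofFn fun i : Fin n => Fin.castAdd q i

def tWire (n q : ℕ) (hq : n ≤ q) (j : Fin n) : Fin (n + q) :=
  ⟨n + j.1, by have := j.2; omega⟩

def dWire (n q : ℕ) (hn : 2 ≤ n) (hq : n ≤ q) (j : Fin n) : Fin (n + q) :=
  if h : j.1 + 1 < n then ⟨n + (j.1 + 1), by omega⟩ else ⟨n, by omega⟩

lemma dWire_spec (n q : ℕ) (hn : 2 ≤ n) (hq : n ≤ q) (j : Fin n) :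
    n ≤ (dWire n q hn hq j).1 ∧ (dWire n q hn hq j).1 ≠ (tWire n q hq j).1 := by
  have hj := j.2
  rw [dWire, tWire]
  split_ifs with h
  · exact ⟨Nat.le_add_right n _, by show n + (j.1 + 1) ≠ n + j.1; omega⟩
  · exact ⟨le_refl n, by show n ≠ n + j.1; omega⟩

lemma tWire_ne_dWire (n q : ℕ) (hn : 2 ≤ n) (hq : n ≤ q) (j : Fin n) :
    tWire n q hq j ≠ dWire n q hn hq j :=
  fun e => (dWire_spec n q hn hq j).2 (congrArg Fin.val e).symm

lemma mem_ctrlList {n q : ℕ} {w : Fin (n + q)} : w ∈ ctrlList n q ↔ w.1 < n := by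
  rw [ctrlList, List.mem_ofFn]
  constructor
  · rintro ⟨i, rfl⟩; simpa using i.2
  · intro h; exact ⟨⟨w.1, h⟩, by apply Fin.ext; simp⟩

lemma tWire_not_mem_ctrl (n q : ℕ) (hq : n ≤ q) (j : Fin n) :
    tWire n q hq j ∉ ctrlList n q := by
  rw [mem_ctrlList, tWire]; simp

lemma dWire_not_mem_ctrl (n q : ℕ) (hn : 2 ≤ n) (hq : n ≤ q) (j : Fin n) :
    dWire n q hn hq j ∉ ctrlList n q := by
  rw [mem_ctrlList]
  have := (dWire_spec n q hn hq j).1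
  omega

lemma tWire_inj (n q : ℕ) (hq : n ≤ q) {j j' : Fin n}
    (h : tWire n q hq j = tWire n q hq j') : j = j' := by
  have := congrArg Fin.val h
  simp only [tWire] at this
  exact Fin.ext (by omega)

-- ===================== notList =====================

def notList (n q : ℕ) (a : Fin n → ZMod 2) : List (Fin (n + q)) :=
  ((Finset.univ.filter fun i : Fin n => a i = 0).toList).map (Fin.castAdd q)

lemma notList_nodup (n q : ℕ) (a : Fin n → ZMod 2) : (notList n q a).Nodup :=
  (Finset.nodup_toList _).map (Fin.castAdd_injective n q)

lemma castAdd_mem_notList {n q : ℕ} (a : Fin n → ZMod 2) (i : Fin n) :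
    Fin.castAdd q i ∈ notList n q a ↔ a i = 0 := by
  simp [notList, List.mem_map, Finset.mem_toList, Finset.mem_filter,
    (Fin.castAdd_injective n q).eq_iff]

lemma notList_val_lt {n q : ℕ} (a : Fin n → ZMod 2) :
    ∀ w ∈ notList n q a, w.1 < n := by
  intro w hw
  simp only [notList, List.mem_map] at hw
  obtain ⟨i, _, rfl⟩ := hw
  simpa using i.2

-- ===================== block =====================

def block (n q : ℕ) (hn : 2 ≤ n) (hq : n ≤ q) (j : Fin n) (a : Fin n → ZMod 2) :
    List (Equiv.Perm (Fin (n + q) → ZMod 2)) :=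
  flips (n + q) (notList n q a) ++
    mcx (n + q) (ctrlList n q) (tWire n q hq j) (dWire n q hn hq j) ++
    flips (n + q) (notList n q a)

lemma block_sem (n q : ℕ) (hn : 2 ≤ n) (hq : n ≤ q) (j : Fin n) (a : Fin n → ZMod 2)
    (s : Fin (n + q) → ZMod 2) :
    circuitPerm (block n q hn hq j a) s =
      Function.update s (tWire n q hq j)
        (s (tWire n q hq j) + ∏ i : Fin n, (s (Fin.castAdd q i) + (a i + 1))) := by
  have hnd := notList_nodup n q a
  have hT := tWire_not_mem_ctrl n q hq j
  have hD := dWire_not_mem_ctrl n q hn hq j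
  have hTD := tWire_ne_dWire n q hn hq j
  have hTnot : tWire n q hq j ∉ notList n q a := fun h => by
    have := notList_val_lt a _ h
    simp [tWire] at this
  rw [block, circuitPerm_append, circuitPerm_append,
    flips_sem _ _ hnd, mcx_sem _ _ _ _ hT hD hTD, flips_sem _ _ hnd]
  have hprod : (((ctrlList n q)).map
      fun w => s w + if w ∈ notList n q a then 1 else 0).prod
      = ∏ i : Fin n, (s (Fin.castAdd q i) + (a i + 1)) := by
    rw [ctrlList, List.map_ofFn, List.prod_ofFn]
    refine Finset.prod_congr rfl fun i _ => ?_
    simp only [Function.comp_apply, castAdd_mem_notList]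
    rcases (by decide : ∀ v : ZMod 2, v = 0 ∨ v = 1) (a i) with h | h <;>
      simp [h, (by decide : (1 : ZMod 2) + 1 = 0)]
  funext w
  rcases eq_or_ne w (tWire n q hq j) with rfl | hw
  · simp only [Function.update_self, if_neg hTnot, add_zero, hprod]
  · simp only [Function.update_of_ne hw]
    exact z2_add_self _ _

-- ===================== per-output circuits =====================

lemma blocks_sem (n q : ℕ) (hn : 2 ≤ n) (hq : n ≤ q) (j : Fin n) (x : Fin n → ZMod 2) :
    ∀ (as : List (Fin n → ZMod 2)) (s : Fin (n + q) → ZMod 2),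
      (∀ i, s (Fin.castAdd q i) = x i) →
      circuitPerm ((as.map (block n q hn hq j)).flatten) s =
        Function.update s (tWire n q hq j)
          (s (tWire n q hq j) + (as.map fun a => ∏ i, (x i + (a i + 1))).sum) := by
  intro as
  induction as with
  | nil =>
    intro s hs
    simp [circuitPerm_nil, Function.update_eq_self]
  | cons a as ih =>
    intro s hs
    have hTc : ∀ i : Fin n, Fin.castAdd q i ≠ tWire n q hq j := fun i e => by
      have := congrArg Fin.val e
      simp [tWire] at this
      omega
    rw [List.map_cons, List.flatten_cons, circuitPerm_append, block_sem]
    simp only [hs]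
    rw [ih _ (fun i => (Function.update_of_ne (hTc i) _ _).trans (hs i))]
    simp only [Function.update_self, Function.update_idem]
    rw [List.map_cons, List.sum_cons, add_assoc]

def circJ (n q : ℕ) (hn : 2 ≤ n) (hq : n ≤ q)
    (f : (Fin n → ZMod 2) → (Fin n → ZMod 2)) (j : Fin n) :
    List (Equiv.Perm (Fin (n + q) → ZMod 2)) :=
  (((Finset.univ.filter fun a : Fin n → ZMod 2 => f a j = 1).toList).map
    (block n q hn hq j)).flatten

lemma circJ_sem (n q : ℕ) (hn : 2 ≤ n) (hq : n ≤ q)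
    (f : (Fin n → ZMod 2) → (Fin n → ZMod 2)) (j : Fin n) (x : Fin n → ZMod 2)
    (s : Fin (n + q) → ZMod 2) (hs : ∀ i, s (Fin.castAdd q i) = x i) :
    circuitPerm (circJ n q hn hq f j) s =
      Function.update s (tWire n q hq j) (s (tWire n q hq j) + f x j) := by
  rw [circJ, blocks_sem n q hn hq j x _ s hs]
  have hdelta : ∀ a : Fin n → ZMod 2,
      (∏ i, (x i + (a i + 1))) = if x = a then 1 else 0 := by
    intro a
    by_cases hxa : x = a
    · subst hxa
      rw [if_pos rfl]
      exact Finset.prod_eq_one fun i _ => (by decide : ∀ v : ZMod 2, v + (v + 1) = 1) (x i)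
    · rw [if_neg hxa]
      obtain ⟨i, hi⟩ : ∃ i, x i ≠ a i := by
        by_contra h; push_neg at h; exact hxa (funext h)
      exact Finset.prod_eq_zero (Finset.mem_univ i)
        ((by decide : ∀ u v : ZMod 2, u ≠ v → u + (v + 1) = 0) _ _ hi)
  rw [Finset.sum_map_toList]
  simp only [hdelta]
  rw [Finset.sum_ite_eq]
  simp only [Finset.mem_filter, Finset.mem_univ, true_and]
  rw [z2_if1 (f x j)]

-- ===================== full circuit =====================

def fullC (n q : ℕ) (hn : 2 ≤ n) (hq : n ≤ q)
    (f : (Fin n → ZMod 2) → (Fin n → ZMod 2)) :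
    List (Equiv.Perm (Fin (n + q) → ZMod 2)) :=
  ((List.finRange n).map (circJ n q hn hq f)).flatten

lemma fullC_parts (n q : ℕ) (hn : 2 ≤ n) (hq : n ≤ q)
    (f : (Fin n → ZMod 2) → (Fin n → ZMod 2)) (x : Fin n → ZMod 2) :
    ∀ js : List (Fin n), js.Nodup → ∀ s : Fin (n + q) → ZMod 2,
      (∀ i, s (Fin.castAdd q i) = x i) →
      (∀ i, circuitPerm ((js.map (circJ n q hn hq f)).flatten) s (Fin.castAdd q i) = x i) ∧
      ∀ j : Fin n, circuitPerm ((js.map (circJ n q hn hq f)).flatten) s (tWire n q hq j)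
        = if j ∈ js then s (tWire n q hq j) + f x j else s (tWire n q hq j) := by
  intro js
  induction js with
  | nil =>
    intro _ s hs
    refine ⟨fun i => ?_, fun j => ?_⟩
    · simpa [circuitPerm_nil] using hs i
    · simp [circuitPerm_nil]
  | cons j0 rest ih =>
    intro hnd s hs
    obtain ⟨hj0, hrest⟩ := List.nodup_cons.mp hnd
    have hs' : ∀ i, Function.update s (tWire n q hq j0)
        (s (tWire n q hq j0) + f x j0) (Fin.castAdd q i) = x i := fun i => by
      have hne : Fin.castAdd q i ≠ tWire n q hq j0 := fun e => by
        have := congrArg Fin.val e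
        simp [tWire] at this
        omega
      exact (Function.update_of_ne hne _ _).trans (hs i)
    rw [List.map_cons, List.flatten_cons]
    refine ⟨fun i => ?_, fun j => ?_⟩
    · rw [circuitPerm_append, circJ_sem n q hn hq f j0 x s hs]
      exact (ih hrest _ hs').1 i
    · rw [circuitPerm_append, circJ_sem n q hn hq f j0 x s hs,
        (ih hrest _ hs').2 j]
      rcases eq_or_ne j j0 with rfl | hj
      · rw [if_neg hj0, if_pos (List.mem_cons_self), Function.update_self]
      · rw [Function.update_of_ne (fun e => hj (tWire_inj n q hq e))]
        simp [List.mem_cons, hj]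

def swapPerm (n q : ℕ) (hq : n ≤ q) : Equiv.Perm (Fin (n + q)) :=
  Function.Involutive.toPerm
    (fun i => ⟨if i.1 < n then i.1 + n else if i.1 < n + n then i.1 - n else i.1,
      by have := i.2; split_ifs <;> omega⟩)
    (by
      intro i
      have := i.2
      apply Fin.ext
      simp only
      split_ifs <;> omega)

lemma swapPerm_castAdd (n q : ℕ) (hq : n ≤ q) (i : Fin n) :
    swapPerm n q hq (Fin.castAdd q i) = tWire n q hq i := by
  apply Fin.ext
  show (if ((Fin.castAdd q i : Fin (n + q)) : ℕ) < n then (Fin.castAdd q i : Fin (n+q)).1 + n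
    else if (Fin.castAdd q i : Fin (n+q)).1 < n + n then (Fin.castAdd q i : Fin (n+q)).1 - n
    else (Fin.castAdd q i : Fin (n+q)).1) = (tWire n q hq i).1
  have h1 : ((Fin.castAdd q i : Fin (n + q)) : ℕ) = i.1 := rfl
  rw [h1, if_pos i.2]
  show i.1 + n = n + i.1
  omega

end StmtNineAux


/-- For `q ≥ n`, every map `Z2^n → Z2^n` is realizable with `q` additional inputs. -/
theorem stmt9 (n q : ℕ) (hn : 2 ≤ n) (hq : n ≤ q)
    (f : (Fin n → ZMod 2) → (Fin n → ZMod 2)) :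
    Realizes n q f := by
  refine ⟨fullC n q hn hq f, ?_, swapPerm n q hq, ?_⟩
  · intro g hg
    rw [fullC, List.mem_flatten] at hg
    obtain ⟨L, hL, hgL⟩ := hg
    rw [List.mem_map] at hL
    obtain ⟨j, _, rfl⟩ := hL
    rw [circJ, List.mem_flatten] at hgL
    obtain ⟨B, hB, hgB⟩ := hgL
    rw [List.mem_map] at hB
    obtain ⟨a, _, rfl⟩ := hB
    rw [block] at hgB
    rcases List.mem_append.mp hgB with h | h
    · rcases List.mem_append.mp h with h | h
      · obtain ⟨i, _, rfl⟩ := List.mem_map.mp h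
        exact ⟨∅, i, by simp, by simp, rfl⟩
      · exact mcx_mem _ _ _ _ (tWire_not_mem_ctrl n q hq j)
          (dWire_not_mem_ctrl n q hn hq j) (tWire_ne_dWire n q hn hq j) g h
    · obtain ⟨i, _, rfl⟩ := List.mem_map.mp h
      exact ⟨∅, i, by simp, by simp, rfl⟩
  · intro x
    funext i
    show circuitPerm (fullC n q hn hq f) (extendMap n q x)
      (swapPerm n q hq (Fin.castAdd q i)) = f x i
    rw [swapPerm_castAdd]
    have hs : ∀ i' : Fin n, extendMap n q x (Fin.castAdd q i') = x i' := fun i' => by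
      rw [extendMap]
      rw [dif_pos (show ((Fin.castAdd q i' : Fin (n + q)) : ℕ) < n from i'.2)]
      exact congrArg x (Fin.ext rfl)
    have hmain := (fullC_parts n q hn hq f x (List.finRange n) (List.nodup_finRange n)
      (extendMap n q x) hs).2 i
    rw [fullC, hmain, if_pos (List.mem_finRange i)]
    have hz : extendMap n q x (tWire n q hq i) = 0 := by
      rw [extendMap, dif_neg (show ¬ ((tWire n q hq i : Fin (n + q)) : ℕ) < n from by
        simp [tWire])]
    rw [hz, zero_add]
end
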